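/- Let f be a submultiplicative (f(st) ≤ f(s)f(t)) monotone convex function on [0,∞), and let A, B be m×m positive semidefinite complex matrices. Then for each j, the j-th largest eigenvalue of f(A ∘ B) is at most the j-th largest eigenvalue of f(A) ∘ f(B), where ∘ is the Hadamard product. -/

import Mathlib

open Matrix
open scoped ComplexOrder Kronecker

/-- Functional calculus for Hermitian matrices: apply `f : ℝ → ℝ` to the eigenvalues in a
spectral decomposition (junk value `0` if the matrix is not Hermitian). -/
noncomputable def hermCFC {ι : Type*} [Fintype ι] [DecidableEq ι]
    (M : Matrix ι ι ℂ) (f : ℝ → ℝ) : Matrix ι ι ℂ :=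
  if h : M.IsHermitian then h.cfc f else 0

/-- Eigenvalues of a Hermitian matrix listed in decreasing order:
`eigDesc M j` is the `(j+1)`-th largest eigenvalue (junk value `0` if not Hermitian). -/
noncomputable def eigDesc {n : ℕ} (M : Matrix (Fin n) (Fin n) ℂ) : Fin n → ℝ :=
  if h : M.IsHermitian then fun j => h.eigenvalues (Tuple.sort h.eigenvalues j.rev) else 0

/-- Eigenvalues of a Hermitian matrix listed in increasing order:
`eigAsc M j` is the `(j+1)`-th smallest eigenvalue (junk value `0` if not Hermitian). -/
noncomputable def eigAsc {n : ℕ} (M : Matrix (Fin n) (Fin n) ℂ) : Fin n → ℝ :=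
  if h : M.IsHermitian then fun j => h.eigenvalues (Tuple.sort h.eigenvalues j) else 0

/-- The absolute value `|X| = (XᴴX)^(1/2)` of a matrix. -/
noncomputable def matAbs {n : ℕ} (X : Matrix (Fin n) (Fin n) ℂ) : Matrix (Fin n) (Fin n) ℂ :=
  (Matrix.posSemidef_conjTranspose_mul_self X).1.cfc Real.sqrt

/-- The Loewner order: `X ≤ Y` iff `Y - X` is positive semidefinite. -/
def loewnerLE {n : ℕ} (X Y : Matrix (Fin n) (Fin n) ℂ) : Prop := (Y - X).PosSemidef



section Aux11proofs
open Complex Finset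


variable {m : ℕ}

/-- sum of `normSq` of coordinates -/
noncomputable def nsq (u : Fin m → ℂ) : ℝ := ∑ i, Complex.normSq (u i)

lemma star_dot (u : Fin m → ℂ) : star u ⬝ᵥ u = ((nsq u : ℝ) : ℂ) := by
  simp only [dotProduct, nsq, Pi.star_apply, Complex.star_def, Complex.ofReal_sum]
  exact Finset.sum_congr rfl fun i _ => by
    rw [Complex.normSq_eq_conj_mul_self]

lemma nsq_pos {u : Fin m → ℂ} (hu : u ≠ 0) : 0 < nsq u := by
  obtain ⟨i, hi⟩ := Function.ne_iff.mp hu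
  have : 0 < Complex.normSq (u i) := by
    simpa [Complex.normSq_pos] using hi
  exact lt_of_lt_of_le this (Finset.single_le_sum (f := fun i => Complex.normSq (u i))
    (fun j _ => Complex.normSq_nonneg _) (Finset.mem_univ i))

lemma dot_PaPw {r : ℕ} (P : Matrix (Fin m) (Fin r) ℂ) (hP : Pᴴ * P = 1)
    (a w : Fin r → ℂ) : star (P *ᵥ a) ⬝ᵥ (P *ᵥ w) = star a ⬝ᵥ w := by
  rw [star_mulVec, dotProduct_mulVec, vecMul_vecMul, hP, vecMul_one]

lemma mulVec_eq_zero {r : ℕ} {P : Matrix (Fin m) (Fin r) ℂ} (hP : Pᴴ * P = 1)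
    {a : Fin r → ℂ} (ha : P *ᵥ a = 0) : a = 0 := by
  have h := dot_PaPw P hP a a
  rw [ha] at h
  simp only [star_zero, zero_dotProduct] at h
  exact dotProduct_star_self_eq_zero.mp h.symm

lemma orth_sub {r : ℕ} (U : Matrix (Fin m) (Fin m) ℂ) (hU : Uᴴ * U = 1)
    {g : Fin r → Fin m} (hg : Function.Injective g) :
    (U.submatrix id g)ᴴ * (U.submatrix id g) = 1 := by
  ext s t
  have h := congrFun (congrFun hU (g s)) (g t)
  simp only [mul_apply, conjTranspose_apply, submatrix_apply, id] at h ⊢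
  rw [h, Matrix.one_apply, Matrix.one_apply]
  simp [hg.eq_iff]

lemma exists_meet {r t : ℕ} (hrt : m < r + t)
    (P : Matrix (Fin m) (Fin r) ℂ) (Q : Matrix (Fin m) (Fin t) ℂ)
    (hP : Pᴴ * P = 1) (hQ : Qᴴ * Q = 1) :
    ∃ a b, P *ᵥ a = Q *ᵥ b ∧ a ≠ 0 ∧ b ≠ 0 := by
  let Φ : ((Fin r → ℂ) × (Fin t → ℂ)) →ₗ[ℂ] (Fin m → ℂ) :=
    (Matrix.mulVecLin P).coprod (Matrix.mulVecLin (-Q))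
  have hni : ¬ Function.Injective Φ := by
    intro h
    have hle := LinearMap.finrank_le_finrank_of_injective h
    rw [Module.finrank_prod, Module.finrank_fin_fun, Module.finrank_fin_fun,
      Module.finrank_fin_fun] at hle
    omega
  obtain ⟨x, y, hxy, hne⟩ := Function.not_injective_iff.mp hni
  have hz0 : Φ (x - y) = 0 := by rw [map_sub, hxy, sub_self]
  have hz : x - y ≠ 0 := sub_ne_zero.mpr hne
  set a := (x - y).1 with ha'
  set b := (x - y).2 with hb'
  have heq : P *ᵥ a - Q *ᵥ b = 0 := by
    have : P *ᵥ a + (-Q) *ᵥ b = 0 := hz0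
    rwa [neg_mulVec, ← sub_eq_add_neg] at this
  have heq' : P *ᵥ a = Q *ᵥ b := sub_eq_zero.mp heq
  have ha : a ≠ 0 := by
    intro h0
    have hb0 : b = 0 := by
      apply mulVec_eq_zero hQ
      rw [← heq', h0, mulVec_zero]
    exact hz (Prod.ext h0 hb0)
  have hb : b ≠ 0 := by
    intro h0
    have ha0 : a = 0 := by
      apply mulVec_eq_zero hP
      rw [heq', h0, mulVec_zero]
    exact hz (Prod.ext ha0 h0)
  exact ⟨a, b, heq', ha, hb⟩

lemma core {r t : ℕ} (hrt : m < r + t) (Y : Matrix (Fin m) (Fin m) ℂ)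
    (P : Matrix (Fin m) (Fin r) ℂ) (Q : Matrix (Fin m) (Fin t) ℂ)
    (hP : Pᴴ * P = 1) (hQ : Qᴴ * Q = 1) {c c' : ℝ}
    (h1 : ∀ a : Fin r → ℂ,
      c * (∑ s, Complex.normSq (a s)) ≤ (star (P *ᵥ a) ⬝ᵥ Y *ᵥ (P *ᵥ a)).re)
    (h2 : ∀ b : Fin t → ℂ,
      (star (Q *ᵥ b) ⬝ᵥ Y *ᵥ (Q *ᵥ b)).re ≤ c' * (∑ s, Complex.normSq (b s))) :
    c ≤ c' := by
  obtain ⟨a, b, heq, ha, hb⟩ := exists_meet hrt P Q hP hQ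
  have hsum : ((nsq a : ℝ) : ℂ) = ((nsq b : ℝ) : ℂ) := by
    rw [← star_dot, ← star_dot, ← dot_PaPw P hP a a, ← dot_PaPw Q hQ b b, heq]
  have hsum' : nsq a = nsq b := by exact_mod_cast hsum
  have hpos : 0 < nsq a := nsq_pos ha
  have hmid : star (P *ᵥ a) ⬝ᵥ Y *ᵥ (P *ᵥ a) = star (Q *ᵥ b) ⬝ᵥ Y *ᵥ (Q *ᵥ b) := by rw [heq]
  have hc : c * nsq a ≤ c' * nsq a := by
    calc c * nsq a ≤ (star (P *ᵥ a) ⬝ᵥ Y *ᵥ (P *ᵥ a)).re := h1 a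
    _ = (star (Q *ᵥ b) ⬝ᵥ Y *ᵥ (Q *ᵥ b)).re := by rw [hmid]
    _ ≤ c' * nsq b := h2 b
    _ = c' * nsq a := by rw [hsum']
  exact le_of_mul_le_mul_right hc hpos

lemma qf_sub {r : ℕ} {Y U : Matrix (Fin m) (Fin m) ℂ} {d : Fin m → ℝ}
    (hU : Uᴴ * U = 1) (hS : Y * U = U * diagonal (Complex.ofReal ∘ d))
    {g : Fin r → Fin m} (hg : Function.Injective g) (a : Fin r → ℂ) :
    star ((U.submatrix id g) *ᵥ a) ⬝ᵥ Y *ᵥ ((U.submatrix id g) *ᵥ a)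
      = ((∑ s, d (g s) * Complex.normSq (a s) : ℝ) : ℂ) := by
  set P := U.submatrix id g with hPdef
  have hMP : Y * P = P * diagonal (Complex.ofReal ∘ d ∘ g) := by
    ext i s
    calc (Y * P) i s = (Y * U) i (g s) := by simp [mul_apply, hPdef]
    _ = U i (g s) * ((d (g s) : ℝ) : ℂ) := by rw [hS, mul_diagonal]; rfl
    _ = (P * diagonal (Complex.ofReal ∘ d ∘ g)) i s := by
        rw [mul_diagonal, hPdef]; rfl
  have h1 : Y *ᵥ (P *ᵥ a) = P *ᵥ (diagonal (Complex.ofReal ∘ d ∘ g) *ᵥ a) := by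
    rw [mulVec_mulVec, hMP, ← mulVec_mulVec]
  rw [h1, dot_PaPw _ (orth_sub U hU hg)]
  simp only [dotProduct, mulVec_diagonal, Function.comp_apply, Pi.star_apply,
    Complex.star_def, Complex.ofReal_sum]
  refine Finset.sum_congr rfl fun s _ => ?_
  rw [Complex.ofReal_mul, Complex.normSq_eq_conj_mul_self]
  ring

lemma unitary_left {Y : Matrix (Fin m) (Fin m) ℂ} (hY : Y.IsHermitian) :
    (hY.eigenvectorUnitary : Matrix (Fin m) (Fin m) ℂ)ᴴ
      * (hY.eigenvectorUnitary : Matrix (Fin m) (Fin m) ℂ) = 1 := by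
  rw [← Matrix.star_eq_conjTranspose]
  exact Matrix.mem_unitaryGroup_iff'.mp (hY.eigenvectorUnitary).2

lemma unitary_right {Y : Matrix (Fin m) (Fin m) ℂ} (hY : Y.IsHermitian) :
    (hY.eigenvectorUnitary : Matrix (Fin m) (Fin m) ℂ)
      * (hY.eigenvectorUnitary : Matrix (Fin m) (Fin m) ℂ)ᴴ = 1 := by
  rw [← Matrix.star_eq_conjTranspose]
  exact Matrix.mem_unitaryGroup_iff.mp (hY.eigenvectorUnitary).2

lemma aux11_cfc_eq {Y : Matrix (Fin m) (Fin m) ℂ} (hY : Y.IsHermitian) (f : ℝ → ℝ) :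
    hY.cfc f = (hY.eigenvectorUnitary : Matrix (Fin m) (Fin m) ℂ)
      * diagonal (Complex.ofReal ∘ f ∘ hY.eigenvalues)
      * (hY.eigenvectorUnitary : Matrix (Fin m) (Fin m) ℂ)ᴴ := by
  rw [Matrix.IsHermitian.cfc, Unitary.conjStarAlgAut_apply, Matrix.star_eq_conjTranspose]
  rfl

lemma spec_eq {Y : Matrix (Fin m) (Fin m) ℂ} (hY : Y.IsHermitian) :
    Y = (hY.eigenvectorUnitary : Matrix (Fin m) (Fin m) ℂ)
      * diagonal (Complex.ofReal ∘ hY.eigenvalues)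
      * (hY.eigenvectorUnitary : Matrix (Fin m) (Fin m) ℂ)ᴴ := by
  rw [← Matrix.star_eq_conjTranspose]
  exact hY.spectral_theorem

lemma spec_mul_cfc {Y : Matrix (Fin m) (Fin m) ℂ} (hY : Y.IsHermitian) (f : ℝ → ℝ) :
    hY.cfc f * (hY.eigenvectorUnitary : Matrix (Fin m) (Fin m) ℂ)
      = (hY.eigenvectorUnitary : Matrix (Fin m) (Fin m) ℂ)
        * diagonal (Complex.ofReal ∘ f ∘ hY.eigenvalues) := by
  rw [aux11_cfc_eq hY f, mul_assoc, unitary_left hY, mul_one]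

lemma cfc_herm {Y : Matrix (Fin m) (Fin m) ℂ} (hY : Y.IsHermitian) (f : ℝ → ℝ) :
    (hY.cfc f).IsHermitian := by
  have hv : star (Complex.ofReal ∘ f ∘ hY.eigenvalues)
      = Complex.ofReal ∘ f ∘ hY.eigenvalues := by
    funext i
    simp [Pi.star_apply]
  rw [aux11_cfc_eq hY f]
  show _ᴴ = _
  rw [conjTranspose_mul, conjTranspose_mul, conjTranspose_conjTranspose,
    diagonal_conjTranspose, hv, ← mul_assoc]

lemma aux11_cfc_id {Y : Matrix (Fin m) (Fin m) ℂ} (hY : Y.IsHermitian) :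
    hY.cfc id = Y := by
  have h : Complex.ofReal ∘ id ∘ hY.eigenvalues = Complex.ofReal ∘ hY.eigenvalues := by
    rw [Function.id_comp]
  rw [aux11_cfc_eq hY id, h, ← spec_eq hY]

lemma spec_mul {Y : Matrix (Fin m) (Fin m) ℂ} (hY : Y.IsHermitian) :
    Y * (hY.eigenvectorUnitary : Matrix (Fin m) (Fin m) ℂ)
      = (hY.eigenvectorUnitary : Matrix (Fin m) (Fin m) ℂ)
        * diagonal (Complex.ofReal ∘ hY.eigenvalues) := by
  have h := spec_mul_cfc hY id
  have h2 : Complex.ofReal ∘ id ∘ hY.eigenvalues = Complex.ofReal ∘ hY.eigenvalues := by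
    rw [Function.id_comp]
  rwa [aux11_cfc_id hY, h2] at h

lemma aux11_cfc_one {Y : Matrix (Fin m) (Fin m) ℂ} (hY : Y.IsHermitian) :
    hY.cfc (fun _ => 1) = 1 := by
  rw [aux11_cfc_eq hY]
  have h : (Complex.ofReal ∘ (fun _ => (1:ℝ)) ∘ hY.eigenvalues)
      = fun _ => (1:ℂ) := by
    funext i
    simp
  rw [h, diagonal_one, mul_one, unitary_right hY]

lemma eigDesc_eq {Y : Matrix (Fin m) (Fin m) ℂ} (hY : Y.IsHermitian) (j : Fin m) :
    eigDesc Y j = hY.eigenvalues (Tuple.sort hY.eigenvalues j.rev) := by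
  unfold eigDesc
  rw [dif_pos hY]

lemma eigDesc_le {Y : Matrix (Fin m) (Fin m) ℂ} (hY : Y.IsHermitian) (j : Fin m)
    (Q : Matrix (Fin m) (Fin (m - j.val)) ℂ) (hQ : Qᴴ * Q = 1) {c : ℝ}
    (h2 : ∀ b, (star (Q *ᵥ b) ⬝ᵥ Y *ᵥ (Q *ᵥ b)).re ≤ c * (∑ s, Complex.normSq (b s))) :
    eigDesc Y j ≤ c := by
  have hjm : j.val < m := j.isLt
  set ν := hY.eigenvalues with hν
  set σ := Tuple.sort ν with hσ
  set g : Fin (j.val + 1) → Fin m := fun s => σ ⟨m - 1 - j.val + s.val, by omega⟩ with hg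
  have hginj : Function.Injective g := by
    intro s s' h
    have h2' := Fin.mk.inj_iff.mp (σ.injective h)
    exact Fin.ext (by omega)
  refine core (by omega) Y _ Q (orth_sub _ (unitary_left hY) hginj) hQ ?_ h2
  intro a
  rw [qf_sub (unitary_left hY) (spec_mul hY) hginj a, Complex.ofReal_re, eigDesc_eq hY j]
  rw [Finset.mul_sum]
  refine Finset.sum_le_sum fun s _ => ?_
  refine mul_le_mul_of_nonneg_right ?_ (Complex.normSq_nonneg _)
  have : (j.rev : Fin m) ≤ ⟨m - 1 - j.val + s.val, by omega⟩ := by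
    have hs := s.2
    rw [Fin.le_def, Fin.val_rev]
    show m - (j.val + 1) ≤ m - 1 - j.val + s.val
    omega
  exact Tuple.monotone_sort ν this

lemma eigDesc_ge {Y : Matrix (Fin m) (Fin m) ℂ} (hY : Y.IsHermitian) (j : Fin m)
    (P : Matrix (Fin m) (Fin (j.val + 1)) ℂ) (hP : Pᴴ * P = 1) {c : ℝ}
    (h1 : ∀ a, c * (∑ s, Complex.normSq (a s)) ≤ (star (P *ᵥ a) ⬝ᵥ Y *ᵥ (P *ᵥ a)).re) :
    c ≤ eigDesc Y j := by
  have hjm : j.val < m := j.isLt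
  set ν := hY.eigenvalues with hν
  set σ := Tuple.sort ν with hσ
  set g : Fin (m - j.val) → Fin m := fun t => σ ⟨t.val, by omega⟩ with hg
  have hginj : Function.Injective g := by
    intro s s' h
    have h2' := Fin.mk.inj_iff.mp (σ.injective h)
    exact Fin.ext (by omega)
  refine core (by omega) Y P _ hP (orth_sub _ (unitary_left hY) hginj) h1 ?_
  intro b
  rw [qf_sub (unitary_left hY) (spec_mul hY) hginj b, Complex.ofReal_re, eigDesc_eq hY j]
  rw [Finset.mul_sum]
  refine Finset.sum_le_sum fun s _ => ?_
  refine mul_le_mul_of_nonneg_right ?_ (Complex.normSq_nonneg _)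
  have : (⟨s.val, by omega⟩ : Fin m) ≤ j.rev := by
    have hs := s.2
    rw [Fin.le_def, Fin.val_rev]
    show s.val ≤ m - (j.val + 1)
    omega
  exact Tuple.monotone_sort ν this

lemma quad_expand (M : Matrix (Fin m) (Fin m) ℂ) (u : Fin m → ℂ) :
    star u ⬝ᵥ M *ᵥ u = ∑ i, ∑ k, (starRingEnd ℂ) (u i) * M i k * u k := by
  simp only [dotProduct, mulVec, Pi.star_apply, Complex.star_def, Finset.mul_sum]
  exact Finset.sum_congr rfl fun i _ => Finset.sum_congr rfl fun k _ => by ring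

lemma entry_UDU (V : Matrix (Fin m) (Fin m) ℂ) (F : Fin m → ℂ) (i k : Fin m) :
    (V * diagonal F * Vᴴ) i k = ∑ p, V i p * F p * (starRingEnd ℂ) (V k p) := by
  rw [mul_apply]
  exact Finset.sum_congr rfl fun p _ => by
    rw [mul_diagonal, conjTranspose_apply, Complex.star_def]

lemma sum4_comm (F : Fin m → Fin m → Fin m → Fin m → ℂ) :
    ∑ i, ∑ k, ∑ p, ∑ q, F i k p q = ∑ p, ∑ q, ∑ i, ∑ k, F i k p q := by
  calc ∑ i, ∑ k, ∑ p, ∑ q, F i k p q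
      = ∑ i, ∑ p, ∑ k, ∑ q, F i k p q :=
        Finset.sum_congr rfl fun i _ => Finset.sum_comm
    _ = ∑ p, ∑ i, ∑ k, ∑ q, F i k p q := Finset.sum_comm
    _ = ∑ p, ∑ i, ∑ q, ∑ k, F i k p q :=
        Finset.sum_congr rfl fun p _ => Finset.sum_congr rfl fun i _ => Finset.sum_comm
    _ = ∑ p, ∑ q, ∑ i, ∑ k, F i k p q :=
        Finset.sum_congr rfl fun p _ => Finset.sum_comm

lemma had_quad (U W : Matrix (Fin m) (Fin m) ℂ) (D E : Fin m → ℂ) (u : Fin m → ℂ) :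
    star u ⬝ᵥ ((U * diagonal D * Uᴴ) ⊙ (W * diagonal E * Wᴴ)) *ᵥ u
      = ∑ p, ∑ q, D p * E q *
          ((Complex.normSq (∑ i, (starRingEnd ℂ) (u i) * U i p * W i q) : ℝ) : ℂ) := by
  have key : ∀ p q : Fin m,
      ((Complex.normSq (∑ i, (starRingEnd ℂ) (u i) * U i p * W i q) : ℝ) : ℂ)
        = (∑ i, (starRingEnd ℂ) (u i) * U i p * W i q)
          * (∑ k, u k * (starRingEnd ℂ) (U k p) * (starRingEnd ℂ) (W k q)) := by
    intro p q
    rw [← Complex.mul_conj (∑ i, (starRingEnd ℂ) (u i) * U i p * W i q)]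
    congr 1
    rw [map_sum]
    exact Finset.sum_congr rfl fun k _ => by
      simp only [_root_.map_mul, Complex.conj_conj]
  calc star u ⬝ᵥ ((U * diagonal D * Uᴴ) ⊙ (W * diagonal E * Wᴴ)) *ᵥ u
      = ∑ i, ∑ k, ∑ p, ∑ q, D p * E q *
          (((starRingEnd ℂ) (u i) * U i p * W i q)
            * (u k * (starRingEnd ℂ) (U k p) * (starRingEnd ℂ) (W k q))) := by
        rw [quad_expand]
        refine Finset.sum_congr rfl fun i _ => Finset.sum_congr rfl fun k _ => ?_
        rw [Matrix.hadamard_apply, entry_UDU U D, entry_UDU W E]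
        have hre : ∀ (S T c d : ℂ), c * (S * T) * d = S * T * (c * d) := fun _ _ _ _ => by
          ring
        rw [hre, Finset.sum_mul_sum, Finset.sum_mul]
        refine Finset.sum_congr rfl fun p _ => ?_
        rw [Finset.sum_mul]
        exact Finset.sum_congr rfl fun q _ => by ring
    _ = ∑ p, ∑ q, ∑ i, ∑ k, D p * E q *
          (((starRingEnd ℂ) (u i) * U i p * W i q)
            * (u k * (starRingEnd ℂ) (U k p) * (starRingEnd ℂ) (W k q))) := sum4_comm _
    _ = ∑ p, ∑ q, D p * E q *
          ((Complex.normSq (∑ i, (starRingEnd ℂ) (u i) * U i p * W i q) : ℝ) : ℂ) := by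
        refine Finset.sum_congr rfl fun p _ => Finset.sum_congr rfl fun q _ => ?_
        rw [key p q, Finset.sum_mul_sum, Finset.mul_sum]
        exact Finset.sum_congr rfl fun i _ => (Finset.mul_sum _ _ _).symm

lemma had_sp {A B : Matrix (Fin m) (Fin m) ℂ} (hA : A.IsHermitian) (hB : B.IsHermitian)
    (g h : ℝ → ℝ) (u : Fin m → ℂ) :
    star u ⬝ᵥ ((hA.cfc g) ⊙ (hB.cfc h)) *ᵥ u
      = ((∑ p, ∑ q, g (hA.eigenvalues p) * h (hB.eigenvalues q) *
          Complex.normSq (∑ i, (starRingEnd ℂ) (u i) *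
            (hA.eigenvectorUnitary : Matrix (Fin m) (Fin m) ℂ) i p *
            (hB.eigenvectorUnitary : Matrix (Fin m) (Fin m) ℂ) i q) : ℝ) : ℂ) := by
  rw [aux11_cfc_eq hA g, aux11_cfc_eq hB h, had_quad, Complex.ofReal_sum]
  refine Finset.sum_congr rfl fun p _ => ?_
  rw [Complex.ofReal_sum]
  refine Finset.sum_congr rfl fun q _ => ?_
  simp only [Function.comp_apply]
  push_cast
  ring

lemma crux {f : ℝ → ℝ}
    (hsub : ∀ s t : ℝ, 0 ≤ s → 0 ≤ t → f (s * t) ≤ f s * f t)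
    (hconv : ConvexOn ℝ (Set.Ici 0) f)
    {A B : Matrix (Fin m) (Fin m) ℂ} (hA : A.PosSemidef) (hB : B.PosSemidef)
    (u : Fin m → ℂ) (hu : nsq u = 1) :
    f ((star u ⬝ᵥ (A ⊙ B) *ᵥ u).re)
      ≤ (star u ⬝ᵥ ((hA.1.cfc f) ⊙ (hB.1.cfc f)) *ᵥ u).re := by
  set α := hA.1.eigenvalues with hα'
  set β := hB.1.eigenvalues with hβ'
  set w : Fin m → Fin m → ℝ := fun p q => Complex.normSq (∑ i, (starRingEnd ℂ) (u i) *
      (hA.1.eigenvectorUnitary : Matrix (Fin m) (Fin m) ℂ) i p *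
      (hB.1.eigenvectorUnitary : Matrix (Fin m) (Fin m) ℂ) i q) with hw
  have hrew : ∀ g h : ℝ → ℝ, star u ⬝ᵥ ((hA.1.cfc g) ⊙ (hB.1.cfc h)) *ᵥ u
      = ((∑ p, ∑ q, g (α p) * h (β q) * w p q : ℝ) : ℂ) := fun g h => had_sp hA.1 hB.1 g h u
  have e1 : (star u ⬝ᵥ (A ⊙ B) *ᵥ u).re = ∑ p, ∑ q, α p * β q * w p q := by
    have h1 := hrew id id
    rw [aux11_cfc_id hA.1, aux11_cfc_id hB.1] at h1
    rw [h1, Complex.ofReal_re]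
    simp only [id_eq]
  have e2 : (star u ⬝ᵥ ((hA.1.cfc f) ⊙ (hB.1.cfc f)) *ᵥ u).re
      = ∑ p, ∑ q, f (α p) * f (β q) * w p q := by
    rw [hrew f f, Complex.ofReal_re]
  have e3 : ∑ p, ∑ q, w p q = 1 := by
    have h1 := hrew (fun _ => 1) (fun _ => 1)
    rw [aux11_cfc_one hA.1, aux11_cfc_one hB.1] at h1
    have h11 : (1 : Matrix (Fin m) (Fin m) ℂ) ⊙ 1 = 1 := by
      ext i k
      by_cases h : i = k <;> simp [Matrix.hadamard_apply, Matrix.one_apply, h]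
    rw [h11, Matrix.one_mulVec, star_dot u, hu] at h1
    have h2 : ((1 : ℝ) : ℂ) = ((∑ p, ∑ q, w p q : ℝ) : ℂ) := by
      rw [h1]
      norm_cast
      exact Finset.sum_congr rfl fun p _ => Finset.sum_congr rfl fun q _ => by ring
    exact_mod_cast h2.symm
  have hw0 : ∀ p q, 0 ≤ w p q := fun p q => Complex.normSq_nonneg _
  have hα : ∀ p, 0 ≤ α p := hA.eigenvalues_nonneg
  have hβ : ∀ q, 0 ≤ β q := hB.eigenvalues_nonneg
  rw [e1, e2]
  have hJ := hconv.map_sum_le (t := (Finset.univ : Finset (Fin m × Fin m)))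
    (w := fun z => w z.1 z.2) (p := fun z => α z.1 * β z.2)
    (fun z _ => hw0 _ _)
    (by rw [Fintype.sum_prod_type]; exact e3)
    (fun z _ => Set.mem_Ici.mpr (mul_nonneg (hα _) (hβ _)))
  calc f (∑ p, ∑ q, α p * β q * w p q)
      = f (∑ z : Fin m × Fin m, w z.1 z.2 • (α z.1 * β z.2)) := by
        congr 1
        rw [Fintype.sum_prod_type]
        exact Finset.sum_congr rfl fun p _ => Finset.sum_congr rfl fun q _ => by
          rw [smul_eq_mul]; ring
    _ ≤ ∑ z : Fin m × Fin m, w z.1 z.2 • f (α z.1 * β z.2) := hJ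
    _ ≤ ∑ z : Fin m × Fin m, w z.1 z.2 • (f (α z.1) * f (β z.2)) := by
        refine Finset.sum_le_sum fun z _ => ?_
        rw [smul_eq_mul, smul_eq_mul]
        exact mul_le_mul_of_nonneg_left (hsub _ _ (hα _) (hβ _)) (hw0 _ _)
    _ = ∑ p, ∑ q, f (α p) * f (β q) * w p q := by
        rw [Fintype.sum_prod_type]
        exact Finset.sum_congr rfl fun p _ => Finset.sum_congr rfl fun q _ => by
          rw [smul_eq_mul]; ring

lemma nsq_smul (k : ℝ) (u : Fin m → ℂ) : nsq (((k : ℝ) : ℂ) • u) = k ^ 2 * nsq u := by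
  unfold nsq
  rw [Finset.mul_sum]
  refine Finset.sum_congr rfl fun i _ => ?_
  simp only [Pi.smul_apply, smul_eq_mul, Complex.normSq_mul, Complex.normSq_ofReal]
  ring

lemma quad_smul (M : Matrix (Fin m) (Fin m) ℂ) (u : Fin m → ℂ) (k : ℝ) :
    (star (((k : ℝ) : ℂ) • u) ⬝ᵥ M *ᵥ (((k : ℝ) : ℂ) • u)).re
      = k ^ 2 * (star u ⬝ᵥ M *ᵥ u).re := by
  have h : star (((k : ℝ) : ℂ) • u) ⬝ᵥ M *ᵥ (((k : ℝ) : ℂ) • u)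
      = ((k : ℝ) : ℂ) * (((k : ℝ) : ℂ) * (star u ⬝ᵥ M *ᵥ u)) := by
    rw [star_smul, smul_dotProduct, Matrix.mulVec_smul, dotProduct_smul]
    simp only [smul_eq_mul, Complex.star_def, Complex.conj_ofReal]
  rw [h, Complex.re_ofReal_mul, Complex.re_ofReal_mul]
  ring

lemma had_herm {A B : Matrix (Fin m) (Fin m) ℂ} (hA : A.IsHermitian)
    (hB : B.IsHermitian) : (A ⊙ B).IsHermitian := by
  show _ᴴ = _
  ext i k
  rw [conjTranspose_apply, Matrix.hadamard_apply, Matrix.hadamard_apply, star_mul',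
    ← conjTranspose_apply A, ← conjTranspose_apply B, hA, hB]

lemma had_psd {A B : Matrix (Fin m) (Fin m) ℂ} (hA : A.PosSemidef)
    (hB : B.PosSemidef) : (A ⊙ B).PosSemidef := by
  refine Matrix.PosSemidef.of_dotProduct_mulVec_nonneg (had_herm hA.1 hB.1) fun x => ?_
  have h1 := had_sp hA.1 hB.1 id id x
  rw [aux11_cfc_id hA.1, aux11_cfc_id hB.1] at h1
  rw [h1, Complex.zero_le_real]
  refine Finset.sum_nonneg fun p _ => Finset.sum_nonneg fun q _ => ?_
  exact mul_nonneg (mul_nonneg (hA.eigenvalues_nonneg p) (hB.eigenvalues_nonneg q))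
    (Complex.normSq_nonneg _)

lemma rhs_bound {f : ℝ → ℝ}
    (hsub : ∀ s t : ℝ, 0 ≤ s → 0 ≤ t → f (s * t) ≤ f s * f t)
    (hconv : ConvexOn ℝ (Set.Ici 0) f)
    {A B : Matrix (Fin m) (Fin m) ℂ} (hA : A.PosSemidef) (hB : B.PosSemidef)
    {r : ℕ} (P : Matrix (Fin m) (Fin r) ℂ) (hP : Pᴴ * P = 1)
    (d : Fin r → ℝ) (dmin dmax c : ℝ) (h0 : 0 ≤ dmin)
    (hlo : ∀ s, dmin ≤ d s) (hhi : ∀ s, d s ≤ dmax)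
    (hcf : ∀ x : ℝ, dmin ≤ x → x ≤ dmax → c ≤ f x)
    (hq : ∀ a : Fin r → ℂ, star (P *ᵥ a) ⬝ᵥ (A ⊙ B) *ᵥ (P *ᵥ a)
        = ((∑ s, d s * Complex.normSq (a s) : ℝ) : ℂ))
    (a : Fin r → ℂ) :
    c * (∑ s, Complex.normSq (a s))
      ≤ (star (P *ᵥ a) ⬝ᵥ ((hA.1.cfc f) ⊙ (hB.1.cfc f)) *ᵥ (P *ᵥ a)).re := by
  by_cases ha : a = 0
  · subst ha
    simp
  · set S := ∑ s, Complex.normSq (a s) with hS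
    have hSpos : 0 < S := nsq_pos ha
    set k : ℝ := (Real.sqrt S)⁻¹ with hk
    have hks : k ^ 2 * S = 1 := by
      rw [hk, inv_pow, Real.sq_sqrt hSpos.le]
      field_simp
    set u := P *ᵥ a with hu'
    have hnsqu : nsq u = S := by
      have h1 := dot_PaPw P hP a a
      rw [star_dot, star_dot] at h1
      exact_mod_cast h1
    set u' := ((k : ℝ) : ℂ) • u with hu''
    have hnu' : nsq u' = 1 := by rw [hu'', nsq_smul, hnsqu, hks]
    have hqu' : (star u' ⬝ᵥ (A ⊙ B) *ᵥ u').re = k ^ 2 * (∑ s, d s * Complex.normSq (a s)) := by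
      rw [hu'', quad_smul, hu', hq a, Complex.ofReal_re]
    have hdlo : dmin * S ≤ ∑ s, d s * Complex.normSq (a s) := by
      rw [hS, Finset.mul_sum]
      exact Finset.sum_le_sum fun s _ =>
        mul_le_mul_of_nonneg_right (hlo s) (Complex.normSq_nonneg _)
    have hdhi : (∑ s, d s * Complex.normSq (a s)) ≤ dmax * S := by
      rw [hS, Finset.mul_sum]
      exact Finset.sum_le_sum fun s _ =>
        mul_le_mul_of_nonneg_right (hhi s) (Complex.normSq_nonneg _)
    have hk2 : 0 ≤ k ^ 2 := sq_nonneg k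
    have hx1 : dmin ≤ (star u' ⬝ᵥ (A ⊙ B) *ᵥ u').re := by
      rw [hqu']
      nlinarith [hdlo, hks, hk2]
    have hx2 : (star u' ⬝ᵥ (A ⊙ B) *ᵥ u').re ≤ dmax := by
      rw [hqu']
      nlinarith [hdhi, hks, hk2]
    have hcru := crux hsub hconv hA hB u' hnu'
    have h1 : c ≤ (star u' ⬝ᵥ ((hA.1.cfc f) ⊙ (hB.1.cfc f)) *ᵥ u').re :=
      (hcf _ hx1 hx2).trans hcru
    have h2 : (star u' ⬝ᵥ ((hA.1.cfc f) ⊙ (hB.1.cfc f)) *ᵥ u').re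
        = k ^ 2 * (star u ⬝ᵥ ((hA.1.cfc f) ⊙ (hB.1.cfc f)) *ᵥ u).re := by
      rw [hu'', quad_smul]
    rw [h2] at h1
    calc c * S ≤ (k ^ 2 * (star u ⬝ᵥ ((hA.1.cfc f) ⊙ (hB.1.cfc f)) *ᵥ u).re) * S :=
          mul_le_mul_of_nonneg_right h1 hSpos.le
    _ = (star u ⬝ᵥ ((hA.1.cfc f) ⊙ (hB.1.cfc f)) *ᵥ u).re * (k ^ 2 * S) := by ring
    _ = (star u ⬝ᵥ ((hA.1.cfc f) ⊙ (hB.1.cfc f)) *ᵥ u).re := by rw [hks, mul_one]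


end Aux11proofs

/-- For a submultiplicative monotone convex `f` on `[0,∞)` and positive semidefinite `A, B`,
`λⱼ↓(f(A ∘ B)) ≤ λⱼ↓(f(A) ∘ f(B))` for every `j`, where `∘` is the Hadamard product. -/
theorem stmt11 {m : ℕ} (f : ℝ → ℝ)
    (hsub : ∀ s t : ℝ, 0 ≤ s → 0 ≤ t → f (s * t) ≤ f s * f t)
    (hmono : MonotoneOn f (Set.Ici 0) ∨ AntitoneOn f (Set.Ici 0))
    (hconv : ConvexOn ℝ (Set.Ici 0) f)
    (A B : Matrix (Fin m) (Fin m) ℂ) (hA : A.PosSemidef) (hB : B.PosSemidef) :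
    ∀ j, eigDesc (hermCFC (A ⊙ B) f) j ≤ eigDesc (hermCFC A f ⊙ hermCFC B f) j := by
  intro j
  have hjm : j.val < m := j.isLt
  have hNpsd : (A ⊙ B).PosSemidef := had_psd hA hB
  have hNh : (A ⊙ B).IsHermitian := hNpsd.1
  have hcfcF : hermCFC (A ⊙ B) f = hNh.cfc f := by unfold hermCFC; rw [dif_pos hNh]
  have hcfcY : hermCFC A f ⊙ hermCFC B f = hA.1.cfc f ⊙ hB.1.cfc f := by
    unfold hermCFC; rw [dif_pos hA.1, dif_pos hB.1]
  set ν := hNh.eigenvalues with hν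
  set σ := Tuple.sort ν with hσ
  set UN := (hNh.eigenvectorUnitary : Matrix (Fin m) (Fin m) ℂ) with hUN
  have hUNl : UNᴴ * UN = 1 := unitary_left hNh
  have hspecN := spec_mul hNh
  have hspecF := spec_mul_cfc hNh f
  have hν0 : ∀ p, 0 ≤ ν p := hNpsd.eigenvalues_nonneg
  have hmσ := Tuple.monotone_sort ν
  have hYherm : (hA.1.cfc f ⊙ hB.1.cfc f).IsHermitian :=
    had_herm (cfc_herm hA.1 f) (cfc_herm hB.1 f)
  rcases hmono with hm | hm
  · -- monotone case
    set c := f (ν (σ j.rev)) with hc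
    have hg1 : Function.Injective
        (fun t : Fin (m - j.val) => σ (⟨t.val, by omega⟩ : Fin m)) := by
      intro s s' h
      have h2' := Fin.mk.inj_iff.mp (σ.injective h)
      exact Fin.ext h2'
    have hL : eigDesc (hermCFC (A ⊙ B) f) j ≤ c := by
      rw [hcfcF]
      refine eigDesc_le (cfc_herm hNh f) j (UN.submatrix id _)
        (orth_sub UN hUNl hg1) ?_
      intro b
      rw [qf_sub hUNl hspecF hg1 b, Complex.ofReal_re, Finset.mul_sum]
      refine Finset.sum_le_sum fun t _ => ?_
      refine mul_le_mul_of_nonneg_right ?_ (Complex.normSq_nonneg _)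
      have hle : ν (σ (⟨t.val, by omega⟩ : Fin m)) ≤ ν (σ j.rev) := by
        refine hmσ ?_
        have ht := t.2
        rw [Fin.le_def, Fin.val_rev]
        show t.val ≤ m - (j.val + 1)
        omega
      exact hm (Set.mem_Ici.mpr (hν0 _)) (Set.mem_Ici.mpr (hν0 _)) hle
    have hg2 : Function.Injective
        (fun s : Fin (j.val + 1) => σ (⟨m - 1 - j.val + s.val, by omega⟩ : Fin m)) := by
      intro s s' h
      have h2' := Fin.mk.inj_iff.mp (σ.injective h)
      exact Fin.ext (by omega)
    have hR : c ≤ eigDesc (hermCFC A f ⊙ hermCFC B f) j := by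
      rw [hcfcY]
      refine eigDesc_ge hYherm j (UN.submatrix id _) (orth_sub UN hUNl hg2) ?_
      intro a
      refine rhs_bound hsub hconv hA hB _ (orth_sub UN hUNl hg2)
        (fun s => ν (σ (⟨m - 1 - j.val + s.val, by omega⟩ : Fin m)))
        (ν (σ j.rev)) (ν (σ (⟨m - 1, by omega⟩ : Fin m))) c (hν0 _) ?_ ?_ ?_ ?_ a
      · intro s
        refine hmσ ?_
        have hs := s.2
        rw [Fin.le_def, Fin.val_rev]
        show m - (j.val + 1) ≤ m - 1 - j.val + s.val
        omega
      · intro s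
        refine hmσ ?_
        have hs := s.2
        rw [Fin.le_def]
        show m - 1 - j.val + s.val ≤ m - 1
        omega
      · intro x h1 h2
        rw [hc]
        exact hm (Set.mem_Ici.mpr (hν0 _)) (Set.mem_Ici.mpr ((hν0 _).trans h1)) h1
      · intro a'
        exact qf_sub hUNl hspecN hg2 a'
    exact hL.trans hR
  · -- antitone case
    set c := f (ν (σ j)) with hc
    have hg1 : Function.Injective
        (fun t : Fin (m - j.val) => σ (⟨j.val + t.val, by omega⟩ : Fin m)) := by
      intro s s' h
      have h2' := Fin.mk.inj_iff.mp (σ.injective h)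
      exact Fin.ext (by omega)
    have hL : eigDesc (hermCFC (A ⊙ B) f) j ≤ c := by
      rw [hcfcF]
      refine eigDesc_le (cfc_herm hNh f) j (UN.submatrix id _)
        (orth_sub UN hUNl hg1) ?_
      intro b
      rw [qf_sub hUNl hspecF hg1 b, Complex.ofReal_re, Finset.mul_sum]
      refine Finset.sum_le_sum fun t _ => ?_
      refine mul_le_mul_of_nonneg_right ?_ (Complex.normSq_nonneg _)
      have hle : ν (σ j) ≤ ν (σ (⟨j.val + t.val, by omega⟩ : Fin m)) := by
        refine hmσ ?_
        rw [Fin.le_def]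
        show j.val ≤ j.val + t.val
        omega
      exact hm (Set.mem_Ici.mpr (hν0 _)) (Set.mem_Ici.mpr (hν0 _)) hle
    have hg2 : Function.Injective
        (fun s : Fin (j.val + 1) => σ (⟨s.val, by omega⟩ : Fin m)) := by
      intro s s' h
      have h2' := Fin.mk.inj_iff.mp (σ.injective h)
      exact Fin.ext h2'
    have hR : c ≤ eigDesc (hermCFC A f ⊙ hermCFC B f) j := by
      rw [hcfcY]
      refine eigDesc_ge hYherm j (UN.submatrix id _) (orth_sub UN hUNl hg2) ?_
      intro a
      refine rhs_bound hsub hconv hA hB _ (orth_sub UN hUNl hg2)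
        (fun s => ν (σ (⟨s.val, by omega⟩ : Fin m)))
        (ν (σ (⟨0, by omega⟩ : Fin m))) (ν (σ j)) c (hν0 _) ?_ ?_ ?_ ?_ a
      · intro s
        refine hmσ ?_
        rw [Fin.le_def]
        show 0 ≤ s.val
        omega
      · intro s
        refine hmσ ?_
        have hs := s.2
        rw [Fin.le_def]
        show s.val ≤ j.val
        omega
      · intro x h1 h2
        rw [hc]
        exact hm (Set.mem_Ici.mpr ((hν0 _).trans h1)) (Set.mem_Ici.mpr (hν0 _)) h2
      · intro a'
        exact qf_sub hUNl hspecN hg2 a'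
    exact hL.trans hR
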